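/- Let n ≥ 1 and let m be a positive integer. Then there exists a constant C_m > 0 such that for every φ ∈ L¹_m(ℝⁿ) and t > 0, the estimate Σ_{|α|=m} ‖x^α e^{tΔ}φ‖₁ ≤ C_m ( ‖ |x|^m φ ‖₁ + t^{m/2} ‖φ‖₁ ) holds. -/

import Mathlib

open MeasureTheory Real Filter
open scoped ENNReal

noncomputable section

/-- `ℝⁿ` as a Euclidean space. -/
abbrev Rn (n : ℕ) : Type := EuclideanSpace ℝ (Fin n)

/-- The Gauss kernel `G_t(x) = (4πt)^{-n/2} exp(-|x|²/(4t))`. -/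
noncomputable def heatKernel (n : ℕ) (t : ℝ) (x : Rn n) : ℝ :=
  (4 * π * t) ^ (-(n : ℝ) / 2) * Real.exp (-‖x‖ ^ 2 / (4 * t))

/-- The heat semigroup `e^{tΔ}φ = G_t ∗ φ` for `t > 0`, and `e^{0Δ}φ = φ`. -/
noncomputable def heatSG (n : ℕ) (t : ℝ) (φ : Rn n → ℝ) : Rn n → ℝ :=
  if t = 0 then φ else fun x => ∫ y : Rn n, heatKernel n t (x - y) * φ y

/-- The Gauss kernel at time `1`. -/
noncomputable def gaussOne (n : ℕ) : Rn n → ℝ := heatKernel n 1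

/-- The dilation `(δ_t ψ)(x) = t^{-n/2} ψ(t^{-1/2} x)`. -/
noncomputable def dil (n : ℕ) (t : ℝ) (ψ : Rn n → ℝ) : Rn n → ℝ :=
  fun x => t ^ (-(n : ℝ) / 2) * ψ ((t ^ (-(1 : ℝ) / 2) : ℝ) • x)

/-- The monomial `x^α = ∏ x_j^{α_j}` for a multi-index `α`. -/
noncomputable def mono (n : ℕ) (α : Fin n → ℕ) (x : Rn n) : ℝ := ∏ j, x j ^ α j

/-- Membership in the weighted space `L¹_m(ℝⁿ)`:
`x^α φ ∈ L¹` for every multi-index `α` with `|α| ≤ m`. -/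
def MemL1m (n m : ℕ) (φ : Rn n → ℝ) : Prop :=
  ∀ α : Fin n → ℕ, (∑ j, α j) ≤ m →
    MemLp (fun x => mono n α x * φ x) 1 (volume : Measure (Rn n))

/-- The partial derivative `∂_j`. -/
noncomputable def pd (n : ℕ) (j : Fin n) (f : Rn n → ℝ) : Rn n → ℝ :=
  fun x => fderiv ℝ f x (EuclideanSpace.single j 1)

/-- The partial derivative `∂^α` of multi-order `α`. -/
noncomputable def pdMulti (n : ℕ) (α : Fin n → ℕ) (f : Rn n → ℝ) : Rn n → ℝ :=
  (List.finRange n).foldr (fun j g => (pd n j)^[α j] g) f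

/-- The rescaled Hermite polynomial
`h_α(x) = Σ_{2β ≤ α} ((−1)^{|β|} α!/(β!(α−2β)!)) x^{α−2β}`. -/
noncomputable def hPoly (n : ℕ) (α : Fin n → ℕ) (x : Rn n) : ℝ :=
  ∑ β ∈ (Finset.Iic α).filter (fun β => ∀ j, 2 * β j ≤ α j),
    (-1 : ℝ) ^ (∑ j, β j) * (∏ j, ((α j).factorial : ℝ)) /
        ((∏ j, ((β j).factorial : ℝ)) * (∏ j, ((α j - 2 * β j).factorial : ℝ))) *
      ∏ j, x j ^ (α j - 2 * β j)

/-- The decay exponent `(n/2)(1 - 1/q)`. -/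
noncomputable def expo (n : ℕ) (q : ℝ≥0∞) : ℝ := (n : ℝ) / 2 * (1 - (1 / q).toReal)

/-- `u` is a global solution in
`X = (C ∩ L^∞)([0,∞); L¹) ∩ (C ∩ L^∞)((0,∞); L^∞)` of the integral equation
`u(t) = e^{tΔ}φ + ∫₀ᵗ e^{(t-s)Δ} f(u(s)) ds`. -/
structure IsGlobalSolution (n : ℕ) (f : ℝ → ℝ) (φ : Rn n → ℝ) (u : ℝ → Rn n → ℝ) : Prop where
  memL1 : ∀ t : ℝ, 0 ≤ t → MemLp (u t) 1 (volume : Measure (Rn n))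
  memLinf : ∀ t : ℝ, 0 < t → MemLp (u t) ⊤ (volume : Measure (Rn n))
  bddL1 : ∃ M : ℝ≥0∞, M ≠ ⊤ ∧ ∀ t : ℝ, 0 ≤ t → eLpNorm (u t) 1 (volume : Measure (Rn n)) ≤ M
  bddLinf : ∃ M : ℝ≥0∞, M ≠ ⊤ ∧ ∀ t : ℝ, 0 < t → eLpNorm (u t) ⊤ (volume : Measure (Rn n)) ≤ M
  contL1 : ∀ t₀ : ℝ, 0 ≤ t₀ →
    Tendsto (fun t => eLpNorm (fun x => u t x - u t₀ x) 1 (volume : Measure (Rn n)))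
      (nhdsWithin t₀ (Set.Ici 0)) (nhds 0)
  contLinf : ∀ t₀ : ℝ, 0 < t₀ →
    Tendsto (fun t => eLpNorm (fun x => u t x - u t₀ x) ⊤ (volume : Measure (Rn n)))
      (nhdsWithin t₀ (Set.Ioi 0)) (nhds 0)
  inteq : ∀ t : ℝ, 0 ≤ t → ∀ᵐ x : Rn n, u t x =
    heatSG n t φ x + ∫ s in Set.Ioc (0 : ℝ) t, heatSG n (t - s) (fun y => f (u s y)) x

/-- `sup_{q ∈ [1,∞]} sup_{t ≥ 0} (1+t)^{(n/2)(1−1/q)} ‖u(t)‖_q < +∞`. -/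
def DecayBound (n : ℕ) (u : ℝ → Rn n → ℝ) : Prop :=
  ∃ M : ℝ≥0∞, M ≠ ⊤ ∧ ∀ q : ℝ≥0∞, 1 ≤ q → ∀ t : ℝ, 0 ≤ t →
    ENNReal.ofReal ((1 + t) ^ expo n q) * eLpNorm (u t) q (volume : Measure (Rn n)) ≤ M

/-- `ε₀` is a smallness constant: for every initial datum `φ ∈ L¹ ∩ L^∞` with
`‖φ‖₁ + ‖φ‖_∞ ≤ ε₀` there is a global solution in `X`, satisfying the decay
estimate, and it is unique in `X`. -/
def IsSmallnessConstant (n : ℕ) (f : ℝ → ℝ) (ε₀ : ℝ) : Prop :=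
  0 < ε₀ ∧ ∀ φ : Rn n → ℝ, MemLp φ 1 (volume : Measure (Rn n)) →
    MemLp φ ⊤ (volume : Measure (Rn n)) →
    eLpNorm φ 1 (volume : Measure (Rn n)) + eLpNorm φ ⊤ (volume : Measure (Rn n)) ≤
      ENNReal.ofReal ε₀ →
    ∃ u : ℝ → Rn n → ℝ, (IsGlobalSolution n f φ u ∧ DecayBound n u) ∧
      ∀ v : ℝ → Rn n → ℝ, IsGlobalSolution n f φ v →
        ∀ t : ℝ, 0 ≤ t → v t =ᵐ[(volume : Measure (Rn n))] u t

/-- `φ₁ = φ + ∫₀^∞ f(u(s)) ds`. -/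
noncomputable def phiOne (n : ℕ) (f : ℝ → ℝ) (φ : Rn n → ℝ) (u : ℝ → Rn n → ℝ) : Rn n → ℝ :=
  fun x => φ x + ∫ s in Set.Ioi (0 : ℝ), f (u s x)

/-- The approximating sequence: `u₁(t) = e^{tΔ}φ₁` and for `N ≥ 2`,
`u_N(t) = e^{tΔ}φ_N + ∫₀ᵗ e^{(t−s)Δ} f(u_{N−1}(s)) ds` with
`φ_N = φ + ∫₀^∞ (f(u(s)) − f(u_{N−1}(s))) ds`. -/
noncomputable def uSeq (n : ℕ) (f : ℝ → ℝ) (φ : Rn n → ℝ) (u : ℝ → Rn n → ℝ) :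
    ℕ → ℝ → Rn n → ℝ
  | 0 => fun _ _ => 0
  | 1 => fun t => heatSG n t (phiOne n f φ u)
  | (N + 2) => fun t x =>
      heatSG n t (fun y => φ y +
        ∫ s in Set.Ioi (0 : ℝ), (f (u s y) - f (uSeq n f φ u (N + 1) s y))) x +
      ∫ s in Set.Ioc (0 : ℝ) t, heatSG n (t - s) (fun y => f (uSeq n f φ u (N + 1) s y)) x

/-- The moment coefficient `c_α = (1/α!) ∫ y^α ψ(y) dy`. -/
noncomputable def momentCoeff (n : ℕ) (ψ : Rn n → ℝ) (α : Fin n → ℕ) : ℝ :=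
  (∏ j, ((α j).factorial : ℝ))⁻¹ * ∫ y : Rn n, mono n α y * ψ y

/-- The `m`-th order asymptotic profile
`Σ_{k=0}^m 2^{−k} t^{−k/2} Σ_{|α|=k} c_α δ_t(h_α G₁)` with moments of `ψ`. -/
noncomputable def expansion (n m : ℕ) (ψ : Rn n → ℝ) (t : ℝ) (x : Rn n) : ℝ :=
  ∑ k ∈ Finset.range (m + 1), (2 : ℝ) ^ (-(k : ℤ)) * t ^ (-(k : ℝ) / 2) *
    ∑ α ∈ Finset.Nat.antidiagonalTuple n k,
      momentCoeff n ψ α * dil n t (fun z => hPoly n α z * gaussOne n z) x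

end

lemma abs_coord_le {n : ℕ} (x : Rn n) (j : Fin n) : |x j| ≤ ‖x‖ := by
  rw [EuclideanSpace.norm_eq, ← Real.sqrt_sq_eq_abs]
  apply Real.sqrt_le_sqrt
  have : ‖x j‖ ^ 2 ≤ ∑ i, ‖x i‖ ^ 2 :=
    Finset.single_le_sum (f := fun i => ‖x i‖ ^ 2) (fun i _ => sq_nonneg _) (Finset.mem_univ j)
  simpa [Real.norm_eq_abs, sq_abs] using this

lemma abs_mono_le {n m : ℕ} {α : Fin n → ℕ} (hα : ∑ j, α j = m) (x : Rn n) :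
    |mono n α x| ≤ ‖x‖ ^ m := by
  rw [mono, Finset.abs_prod]
  calc ∏ j, |x j ^ α j| ≤ ∏ j, ‖x‖ ^ α j :=
        Finset.prod_le_prod (fun _ _ => abs_nonneg _)
          (fun j _ => by rw [abs_pow]; exact pow_le_pow_left₀ (abs_nonneg _) (abs_coord_le x j) _)
    _ = ‖x‖ ^ m := by rw [Finset.prod_pow_eq_pow_sum, hα]

lemma heatKernel_nonneg {n : ℕ} {t : ℝ} (ht : 0 < t) (x : Rn n) : 0 ≤ heatKernel n t x := by
  unfold heatKernel
  have := Real.pi_pos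
  positivity

lemma heatKernel_continuous {n : ℕ} (t : ℝ) : Continuous (heatKernel n t) := by
  unfold heatKernel
  exact continuous_const.mul (Real.continuous_exp.comp (((continuous_norm.pow 2).neg).div_const _))

lemma pow_add_le {m : ℕ} {a b : ℝ} (ha : 0 ≤ a) (hb : 0 ≤ b) :
    (a + b) ^ m ≤ 2 ^ m * (a ^ m + b ^ m) := by
  have h1 : a + b ≤ 2 * max a b := by
    rcases max_cases a b with ⟨h, h'⟩ | ⟨h, h'⟩ <;> rw [h] <;> linarith
  calc (a + b) ^ m ≤ (2 * max a b) ^ m :=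
        pow_le_pow_left₀ (by positivity) h1 _
    _ = 2 ^ m * (max a b) ^ m := mul_pow _ _ _
    _ ≤ 2 ^ m * (a ^ m + b ^ m) := by
        gcongr
        rcases max_cases a b with ⟨h, _⟩ | ⟨h, _⟩ <;> rw [h]
        · nlinarith [pow_nonneg hb m]
        · nlinarith [pow_nonneg ha m]

lemma moment_ptwise {t : ℝ} (ht : 0 < t) (m : ℕ) {s : ℝ} (hs : 0 ≤ s) :
    s ^ m * Real.exp (-s ^ 2 / (4 * t)) ≤
      (1 + 8 ^ m * m.factorial) * t ^ ((m : ℝ) / 2) * Real.exp (-s ^ 2 / (8 * t)) := by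
  set Cm : ℝ := 1 + 8 ^ m * m.factorial with hCm
  have hst : 0 < Real.sqrt t := Real.sqrt_pos.2 ht
  set r : ℝ := s / Real.sqrt t with hr
  have hr0 : 0 ≤ r := div_nonneg hs hst.le
  have hsr : s = Real.sqrt t * r := by rw [hr]; field_simp
  have hs2 : s ^ 2 = t * r ^ 2 := by rw [hsr, mul_pow, Real.sq_sqrt ht.le]
  have hsm : s ^ m = t ^ ((m : ℝ) / 2) * r ^ m := by
    rw [hsr, mul_pow]
    congr 1
    rw [show ((m : ℝ) / 2) = (1 / 2) * (m : ℝ) by ring, Real.rpow_mul ht.le,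
      Real.rpow_natCast, Real.sqrt_eq_rpow]
  have hexp : -s ^ 2 / (4 * t) = -r ^ 2 / 8 + -r ^ 2 / 8 := by
    rw [hs2]; field_simp; ring
  have hexp2 : -s ^ 2 / (8 * t) = -r ^ 2 / 8 := by
    rw [hs2]; field_simp
  have key : r ^ m * Real.exp (-r ^ 2 / 8) ≤ Cm := by
    have e1 : r ^ m ≤ 1 + r ^ (2 * m) := by
      rcases le_total r 1 with h | h
      · have : r ^ m ≤ 1 := pow_le_one₀ hr0 h
        have := pow_nonneg hr0 (2 * m)
        linarith
      · have : r ^ m ≤ r ^ (2 * m) := pow_le_pow_right₀ h (by omega)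
        linarith
    have e2 : r ^ (2 * m) = 8 ^ m * (r ^ 2 / 8) ^ m := by
      rw [← mul_pow, mul_div_cancel₀ _ (by norm_num : (8:ℝ) ≠ 0), ← pow_mul, mul_comm 2 m]
    have e3 : (r ^ 2 / 8) ^ m ≤ m.factorial * Real.exp (r ^ 2 / 8) := by
      have h := Real.pow_div_factorial_le_exp (r ^ 2 / 8) (by positivity) m
      rw [div_le_iff₀ (by positivity : (0 : ℝ) < (m.factorial : ℝ))] at h
      linarith [h]
    have e4 : (1 : ℝ) ≤ Real.exp (r ^ 2 / 8) := Real.one_le_exp (by positivity)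
    have e5 : r ^ m ≤ Cm * Real.exp (r ^ 2 / 8) := by
      have h8 : (0:ℝ) ≤ 8 ^ m := by positivity
      calc r ^ m ≤ 1 + r ^ (2 * m) := e1
        _ = 1 + 8 ^ m * (r ^ 2 / 8) ^ m := by rw [e2]
        _ ≤ 1 + 8 ^ m * (m.factorial * Real.exp (r ^ 2 / 8)) := by nlinarith
        _ ≤ Cm * Real.exp (r ^ 2 / 8) := by rw [hCm]; nlinarith
    have := mul_le_mul_of_nonneg_right e5 (Real.exp_nonneg (-r ^ 2 / 8))
    calc r ^ m * Real.exp (-r ^ 2 / 8) ≤ Cm * Real.exp (r ^ 2 / 8) * Real.exp (-r ^ 2 / 8) := this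
      _ = Cm := by
          rw [mul_assoc, ← Real.exp_add, show r ^ 2 / 8 + -r ^ 2 / 8 = 0 by ring, Real.exp_zero,
            mul_one]
  have htm : (0:ℝ) ≤ t ^ ((m : ℝ) / 2) := Real.rpow_nonneg ht.le _
  calc s ^ m * Real.exp (-s ^ 2 / (4 * t))
      = t ^ ((m : ℝ) / 2) * (r ^ m * Real.exp (-r ^ 2 / 8)) * Real.exp (-r ^ 2 / 8) := by
        rw [hsm, hexp, Real.exp_add]; ring
    _ ≤ t ^ ((m : ℝ) / 2) * Cm * Real.exp (-r ^ 2 / 8) := by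
        gcongr
    _ = Cm * t ^ ((m : ℝ) / 2) * Real.exp (-s ^ 2 / (8 * t)) := by rw [hexp2]; ring

lemma integrable_gauss {n : ℕ} {b : ℝ} (hb : 0 < b) :
    Integrable (fun v : Rn n => Real.exp (-b * ‖v‖ ^ 2)) := by
  have h := (GaussianFourier.integrable_cexp_neg_mul_sq_norm_add (b := (b : ℂ))
    (by simpa using hb) 0 (0 : Rn n)).re
  refine h.congr (Filter.Eventually.of_forall fun v => ?_)
  show RCLike.re (Complex.exp _) = _
  simp only [zero_mul, add_zero]
  rw [show (-(b : ℂ) * (‖v‖ : ℂ) ^ 2) = ((-b * ‖v‖ ^ 2 : ℝ) : ℂ) by push_cast; ring]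
  exact Complex.exp_ofReal_re _

lemma gauss_lintegral {n : ℕ} {b : ℝ} (hb : 0 < b) :
    ∫⁻ z : Rn n, ENNReal.ofReal (Real.exp (-b * ‖z‖ ^ 2)) =
      ENNReal.ofReal ((π / b) ^ ((n : ℝ) / 2)) := by
  rw [← ofReal_integral_eq_lintegral_ofReal (integrable_gauss hb)
    (Filter.Eventually.of_forall fun x => (Real.exp_pos _).le)]
  rw [GaussianFourier.integral_rexp_neg_mul_sq_norm hb, finrank_euclideanSpace_fin]

lemma lint_kernel {n : ℕ} {t : ℝ} (ht : 0 < t) :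
    ∫⁻ z : Rn n, ENNReal.ofReal (heatKernel n t z) = 1 := by
  have hc : (0 : ℝ) ≤ (4 * π * t) ^ (-(n : ℝ) / 2) := by
    have := Real.pi_pos; positivity
  have hrw : ∀ z : Rn n, heatKernel n t z =
      (4 * π * t) ^ (-(n : ℝ) / 2) * Real.exp (-(1 / (4 * t)) * ‖z‖ ^ 2) := by
    intro z
    rw [heatKernel]
    congr 1
    congr 1
    field_simp
  simp_rw [hrw, ENNReal.ofReal_mul hc]
  rw [lintegral_const_mul' _ _ ENNReal.ofReal_ne_top, gauss_lintegral (by positivity),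
    ← ENNReal.ofReal_mul hc]
  have h4 : (0 : ℝ) < 4 * π * t := by have := Real.pi_pos; positivity
  have : π / (1 / (4 * t)) = 4 * π * t := by field_simp
  rw [this, ← Real.rpow_add h4, show -(n : ℝ) / 2 + (n : ℝ) / 2 = 0 by ring, Real.rpow_zero]
  norm_num

lemma lint_kernel_moment {n : ℕ} {t : ℝ} (ht : 0 < t) (m : ℕ) :
    ∫⁻ z : Rn n, ENNReal.ofReal (‖z‖ ^ m * heatKernel n t z) ≤
      ENNReal.ofReal ((1 + 8 ^ m * m.factorial) * 2 ^ ((n : ℝ) / 2) * t ^ ((m : ℝ) / 2)) := by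
  have hπ := Real.pi_pos
  have hc : (0 : ℝ) ≤ (4 * π * t) ^ (-(n : ℝ) / 2) := by positivity
  set Cm : ℝ := 1 + 8 ^ m * m.factorial with hCm
  have hCm0 : (0 : ℝ) ≤ Cm := by positivity
  have htm : (0 : ℝ) ≤ t ^ ((m : ℝ) / 2) := Real.rpow_nonneg ht.le _
  have step1 : ∀ z : Rn n, ‖z‖ ^ m * heatKernel n t z ≤
      Cm * t ^ ((m : ℝ) / 2) * (4 * π * t) ^ (-(n : ℝ) / 2) *
        Real.exp (-(1 / (8 * t)) * ‖z‖ ^ 2) := by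
    intro z
    rw [heatKernel]
    have h := moment_ptwise ht m (norm_nonneg z)
    calc ‖z‖ ^ m * ((4 * π * t) ^ (-(n : ℝ) / 2) * Real.exp (-‖z‖ ^ 2 / (4 * t)))
        = (4 * π * t) ^ (-(n : ℝ) / 2) * (‖z‖ ^ m * Real.exp (-‖z‖ ^ 2 / (4 * t))) := by ring
      _ ≤ (4 * π * t) ^ (-(n : ℝ) / 2) *
          (Cm * t ^ ((m : ℝ) / 2) * Real.exp (-‖z‖ ^ 2 / (8 * t))) := by gcongr
      _ = Cm * t ^ ((m : ℝ) / 2) * (4 * π * t) ^ (-(n : ℝ) / 2) *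
          Real.exp (-(1 / (8 * t)) * ‖z‖ ^ 2) := by
          rw [show -(1 / (8 * t)) * ‖z‖ ^ 2 = -‖z‖ ^ 2 / (8 * t) by field_simp]
          ring
  calc ∫⁻ z : Rn n, ENNReal.ofReal (‖z‖ ^ m * heatKernel n t z)
      ≤ ∫⁻ z : Rn n, ENNReal.ofReal (Cm * t ^ ((m : ℝ) / 2) * (4 * π * t) ^ (-(n : ℝ) / 2) *
          Real.exp (-(1 / (8 * t)) * ‖z‖ ^ 2)) :=
        lintegral_mono fun z => ENNReal.ofReal_le_ofReal (step1 z)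
    _ = ENNReal.ofReal (Cm * t ^ ((m : ℝ) / 2) * (4 * π * t) ^ (-(n : ℝ) / 2)) *
        ∫⁻ z : Rn n, ENNReal.ofReal (Real.exp (-(1 / (8 * t)) * ‖z‖ ^ 2)) := by
        simp_rw [ENNReal.ofReal_mul (by positivity : (0:ℝ) ≤ Cm * t ^ ((m : ℝ) / 2) * (4 * π * t) ^ (-(n : ℝ) / 2))]
        rw [lintegral_const_mul' _ _ ENNReal.ofReal_ne_top]
    _ = ENNReal.ofReal (Cm * t ^ ((m : ℝ) / 2) * (4 * π * t) ^ (-(n : ℝ) / 2) *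
        (π / (1 / (8 * t))) ^ ((n : ℝ) / 2)) := by
        rw [gauss_lintegral (by positivity),
          ← ENNReal.ofReal_mul (by positivity : (0:ℝ) ≤ Cm * t ^ ((m : ℝ) / 2) * (4 * π * t) ^ (-(n : ℝ) / 2))]
    _ ≤ ENNReal.ofReal (Cm * 2 ^ ((n : ℝ) / 2) * t ^ ((m : ℝ) / 2)) := by
        apply ENNReal.ofReal_le_ofReal
        have h1 : π / (1 / (8 * t)) = 2 * (4 * π * t) := by field_simp; ring
        rw [h1, show (2 * (4 * π * t)) ^ ((n : ℝ) / 2) =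
          2 ^ ((n : ℝ) / 2) * (4 * π * t) ^ ((n : ℝ) / 2) from
            Real.mul_rpow (by norm_num) (by positivity)]
        have h2 : (4 * π * t) ^ (-(n : ℝ) / 2) * (4 * π * t) ^ ((n : ℝ) / 2) = 1 := by
          rw [← Real.rpow_add (by positivity), show -(n : ℝ) / 2 + (n : ℝ) / 2 = 0 by ring,
            Real.rpow_zero]
        refine le_of_eq ?_
        calc Cm * t ^ ((m : ℝ) / 2) * (4 * π * t) ^ (-(n : ℝ) / 2) *
              (2 ^ ((n : ℝ) / 2) * (4 * π * t) ^ ((n : ℝ) / 2))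
            = Cm * 2 ^ ((n : ℝ) / 2) * t ^ ((m : ℝ) / 2) *
              ((4 * π * t) ^ (-(n : ℝ) / 2) * (4 * π * t) ^ ((n : ℝ) / 2)) := by ring
          _ = Cm * 2 ^ ((n : ℝ) / 2) * t ^ ((m : ℝ) / 2) := by rw [h2, mul_one]

lemma perAlpha {n m : ℕ} {t : ℝ} (ht : 0 < t) (φ : Rn n → ℝ)
    (hφ : MemLp φ 1 (volume : Measure (Rn n))) {α : Fin n → ℕ} (hα : ∑ j, α j = m) :
    eLpNorm (fun x => mono n α x * heatSG n t φ x) 1 (volume : Measure (Rn n)) ≤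
      ENNReal.ofReal (2 ^ m * ((1 + 8 ^ m * m.factorial) * 2 ^ ((n : ℝ) / 2) + 1)) *
        (eLpNorm (fun x : Rn n => ‖x‖ ^ m * φ x) 1 (volume : Measure (Rn n)) +
          ENNReal.ofReal (t ^ ((m : ℝ) / 2)) * eLpNorm φ 1 (volume : Measure (Rn n))) := by
  classical
  set D : ℝ := (1 + 8 ^ m * m.factorial) * 2 ^ ((n : ℝ) / 2) with hD
  have hD1 : (1 : ℝ) ≤ D := by
    rw [hD]
    have h1 : (1 : ℝ) ≤ 1 + 8 ^ m * m.factorial := by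
      have : (0:ℝ) ≤ 8 ^ m * m.factorial := by positivity
      linarith
    have h2 : (1 : ℝ) ≤ 2 ^ ((n : ℝ) / 2) :=
      Real.one_le_rpow (by norm_num) (by positivity : (0:ℝ) ≤ (n : ℝ) / 2)
    nlinarith
  set A : ℝ := 2 ^ m * (D + 1) with hA
  set k : Rn n → ℝ≥0∞ := fun z => ENNReal.ofReal (heatKernel n t z) with hk
  have hkmeas : Measurable k := (heatKernel_continuous t).measurable.ennreal_ofReal
  set P : Rn n → ℝ≥0∞ := fun z => ENNReal.ofReal (‖z‖ ^ m) with hP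
  have hPmeas : Measurable P := (continuous_norm.pow m).measurable.ennreal_ofReal
  have hg : AEMeasurable (fun y : Rn n => (‖φ y‖₊ : ℝ≥0∞)) volume :=
    hφ.aestronglyMeasurable.enorm
  set g' : Rn n → ℝ≥0∞ := hg.mk _ with hg'
  have hg'meas : Measurable g' := hg.measurable_mk
  have hgg' : (fun y : Rn n => (‖φ y‖₊ : ℝ≥0∞)) =ᵐ[volume] g' := hg.ae_eq_mk
  set C2 : ℝ≥0∞ := ENNReal.ofReal (2 ^ m) with hC2
  -- identification of the norms
  have hNφ : eLpNorm φ 1 (volume : Measure (Rn n)) = ∫⁻ y, g' y := by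
    rw [eLpNorm_one_eq_lintegral_enorm]
    exact lintegral_congr_ae hgg'
  have hMφ : eLpNorm (fun x : Rn n => ‖x‖ ^ m * φ x) 1 (volume : Measure (Rn n)) =
      ∫⁻ y, P y * g' y := by
    rw [eLpNorm_one_eq_lintegral_enorm]
    refine lintegral_congr_ae (hgg'.mono fun y hy => ?_)
    show (‖‖y‖ ^ m * φ y‖ₑ) = P y * g' y
    rw [enorm_mul, Real.enorm_eq_ofReal (by positivity),
      show ‖φ y‖ₑ = g' y from hy]
  -- step 1 : bound by the double lintegral
  have step1 : eLpNorm (fun x => mono n α x * heatSG n t φ x) 1 (volume : Measure (Rn n)) ≤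
      ∫⁻ x, P x * ∫⁻ y, k (x - y) * g' y := by
    rw [eLpNorm_one_eq_lintegral_enorm]
    refine lintegral_mono fun x => ?_
    have hsg : heatSG n t φ x = ∫ y, heatKernel n t (x - y) * φ y := by
      rw [heatSG, if_neg ht.ne']
    calc (↑‖mono n α x * heatSG n t φ x‖₊ : ℝ≥0∞)
        = ↑‖mono n α x‖₊ * ↑‖heatSG n t φ x‖₊ := by rw [nnnorm_mul, ENNReal.coe_mul]
      _ ≤ P x * ∫⁻ y, k (x - y) * (‖φ y‖₊ : ℝ≥0∞) := by
          apply mul_le_mul'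
          · show ‖mono n α x‖ₑ ≤ P x
            rw [← ofReal_norm]
            exact ENNReal.ofReal_le_ofReal
              (by simpa [Real.norm_eq_abs] using abs_mono_le hα x)
          · rw [hsg]
            refine (enorm_integral_le_lintegral_enorm _).trans
              (le_of_eq (lintegral_congr fun y => ?_))
            rw [enorm_mul, Real.enorm_eq_ofReal (heatKernel_nonneg ht _)]; rfl
      _ = P x * ∫⁻ y, k (x - y) * g' y := by
          congr 1
          exact lintegral_congr_ae (hgg'.mono fun y hy => by
            show k (x - y) * (‖φ y‖₊ : ℝ≥0∞) = k (x - y) * g' y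
            rw [show (‖φ y‖₊ : ℝ≥0∞) = g' y from hy])
  -- the two kernel integrals
  have hIm : (∫⁻ z, P z * k z) ≤ ENNReal.ofReal (D * t ^ ((m : ℝ) / 2)) := by
    have : ∀ z : Rn n, P z * k z = ENNReal.ofReal (‖z‖ ^ m * heatKernel n t z) := fun z => by
      rw [hP, hk, ENNReal.ofReal_mul (by positivity)]
    simp_rw [this]
    refine (lint_kernel_moment ht m).trans (le_of_eq ?_)
    rw [hD]
  have hI0 : (∫⁻ z, k z) = 1 := lint_kernel ht
  -- measurable bivariate functions
  set F1 : Rn n → Rn n → ℝ≥0∞ := fun x y => C2 * (P (x - y) * k (x - y) * g' y) with hF1def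
  set F2 : Rn n → Rn n → ℝ≥0∞ := fun x y => C2 * (P y * k (x - y) * g' y) with hF2def
  have msub : Measurable fun p : Rn n × Rn n => p.1 - p.2 :=
    measurable_fst.sub measurable_snd
  have hF1 : Measurable (Function.uncurry F1) :=
    ((((hPmeas.comp msub).mul (hkmeas.comp msub)).mul
      (hg'meas.comp measurable_snd)).const_mul C2)
  have hF2 : Measurable (Function.uncurry F2) :=
    ((((hPmeas.comp measurable_snd).mul (hkmeas.comp msub)).mul
      (hg'meas.comp measurable_snd)).const_mul C2)
  -- step 2 : pointwise bound inside
  have step2 : (∫⁻ x, P x * ∫⁻ y, k (x - y) * g' y) ≤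
      ∫⁻ x, ∫⁻ y, F1 x y + F2 x y := by
    refine le_trans (le_of_eq (lintegral_congr fun x =>
      (lintegral_const_mul' _ _ ENNReal.ofReal_ne_top).symm)) ?_
    refine lintegral_mono fun x => lintegral_mono fun y => ?_
    have hPx : P x ≤ C2 * (P (x - y) + P y) := by
      rw [hP, hC2, ← ENNReal.ofReal_add (by positivity) (by positivity),
        ← ENNReal.ofReal_mul (by positivity)]
      apply ENNReal.ofReal_le_ofReal
      have h1 : ‖x‖ ≤ ‖x - y‖ + ‖y‖ := by
        calc ‖x‖ = ‖x - y + y‖ := by rw [sub_add_cancel]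
          _ ≤ ‖x - y‖ + ‖y‖ := norm_add_le _ _
      calc ‖x‖ ^ m ≤ (‖x - y‖ + ‖y‖) ^ m := pow_le_pow_left₀ (norm_nonneg _) h1 _
        _ ≤ 2 ^ m * (‖x - y‖ ^ m + ‖y‖ ^ m) := pow_add_le (norm_nonneg _) (norm_nonneg _)
    calc P x * (k (x - y) * g' y) ≤ (C2 * (P (x - y) + P y)) * (k (x - y) * g' y) :=
          mul_le_mul_left hPx _
      _ = F1 x y + F2 x y := by rw [hF1def, hF2def]; ring
  -- step 3 : split and swap
  have step3 : (∫⁻ x, ∫⁻ y, F1 x y + F2 x y) =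
      (∫⁻ y, ∫⁻ x, F1 x y) + ∫⁻ y, ∫⁻ x, F2 x y := by
    have e1 : (∫⁻ x, ∫⁻ y, F1 x y + F2 x y) = (∫⁻ x, ∫⁻ y, F1 x y) + ∫⁻ x, ∫⁻ y, F2 x y := by
      have : ∀ x, (∫⁻ y, F1 x y + F2 x y) = (∫⁻ y, F1 x y) + ∫⁻ y, F2 x y := fun x =>
        lintegral_add_left (hF1.comp (measurable_const.prodMk measurable_id)) _
      simp_rw [this]
      exact lintegral_add_left (hF1.lintegral_prod_right) _
    rw [e1, lintegral_lintegral_swap hF1.aemeasurable, lintegral_lintegral_swap hF2.aemeasurable]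
  -- step 4 : evaluate the two terms
  have term1 : (∫⁻ y, ∫⁻ x, F1 x y) ≤
      C2 * ENNReal.ofReal (D * t ^ ((m : ℝ) / 2)) * ∫⁻ y, g' y := by
    have e1 : ∀ y : Rn n, (∫⁻ x, F1 x y) = (C2 * g' y) * ∫⁻ z, P z * k z := by
      intro y
      have : ∀ x : Rn n, F1 x y = (C2 * g' y) * (P (x - y) * k (x - y)) := fun x => by
        rw [hF1def]; ring
      simp_rw [this]
      rw [lintegral_const_mul (C2 * g' y)
        (show Measurable fun x : Rn n => P (x - y) * k (x - y) from
          (hPmeas.comp (measurable_id.sub measurable_const)).mul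
            (hkmeas.comp (measurable_id.sub measurable_const)))]
      congr 1
      exact lintegral_sub_right_eq_self (fun z => P z * k z) y
    simp_rw [e1]
    have : ∀ y : Rn n, (C2 * g' y) * (∫⁻ z, P z * k z) =
        (C2 * ∫⁻ z, P z * k z) * g' y := fun y => by ring
    simp_rw [this]
    rw [lintegral_const_mul _ hg'meas]
    exact mul_le_mul_left (by rw [mul_assoc] at *; exact mul_le_mul_right hIm _) _
  have term2 : (∫⁻ y, ∫⁻ x, F2 x y) = C2 * ∫⁻ y, P y * g' y := by
    have e1 : ∀ y : Rn n, (∫⁻ x, F2 x y) = C2 * (P y * g' y) := by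
      intro y
      have : ∀ x : Rn n, F2 x y = (C2 * (P y * g' y)) * k (x - y) := fun x => by
        rw [hF2def]; ring
      simp_rw [this]
      rw [lintegral_const_mul (C2 * (P y * g' y))
        (show Measurable fun x : Rn n => k (x - y) from
          hkmeas.comp (measurable_id.sub measurable_const)),
        lintegral_sub_right_eq_self k y, hI0, mul_one]
    simp_rw [e1]
    exact lintegral_const_mul _ (hPmeas.mul hg'meas)
  -- assemble
  have hC2A : C2 ≤ ENNReal.ofReal A := by
    rw [hC2, hA]
    exact ENNReal.ofReal_le_ofReal (by nlinarith [pow_pos (by norm_num : (0:ℝ) < 2) m])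
  have hC2D : C2 * ENNReal.ofReal (D * t ^ ((m : ℝ) / 2)) ≤
      ENNReal.ofReal A * ENNReal.ofReal (t ^ ((m : ℝ) / 2)) := by
    rw [hC2, hA, ← ENNReal.ofReal_mul (by positivity),
      ← ENNReal.ofReal_mul (by positivity)]
    refine ENNReal.ofReal_le_ofReal ?_
    have htm : (0 : ℝ) ≤ t ^ ((m : ℝ) / 2) := Real.rpow_nonneg ht.le _
    have h2m : (0 : ℝ) < 2 ^ m := by positivity
    nlinarith
  calc eLpNorm (fun x => mono n α x * heatSG n t φ x) 1 (volume : Measure (Rn n))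
      ≤ ∫⁻ x, P x * ∫⁻ y, k (x - y) * g' y := step1
    _ ≤ ∫⁻ x, ∫⁻ y, F1 x y + F2 x y := step2
    _ = (∫⁻ y, ∫⁻ x, F1 x y) + ∫⁻ y, ∫⁻ x, F2 x y := step3
    _ ≤ C2 * ENNReal.ofReal (D * t ^ ((m : ℝ) / 2)) * (∫⁻ y, g' y) + C2 * ∫⁻ y, P y * g' y := by
        exact add_le_add term1 (le_of_eq term2)
    _ ≤ ENNReal.ofReal A * (ENNReal.ofReal (t ^ ((m : ℝ) / 2)) * ∫⁻ y, g' y) +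
        ENNReal.ofReal A * ∫⁻ y, P y * g' y := by
        refine add_le_add ?_ (mul_le_mul_left hC2A _)
        rw [← mul_assoc]
        exact mul_le_mul_left hC2D _
    _ = ENNReal.ofReal A *
        (eLpNorm (fun x : Rn n => ‖x‖ ^ m * φ x) 1 (volume : Measure (Rn n)) +
          ENNReal.ofReal (t ^ ((m : ℝ) / 2)) * eLpNorm φ 1 (volume : Measure (Rn n))) := by
        rw [hMφ, hNφ, mul_add]
        ring

/-- estimate (2.12):
`Σ_{|α|=m} ‖x^α e^{tΔ}φ‖₁ ≤ C_m ( ‖|x|^m φ‖₁ + t^{m/2} ‖φ‖₁ )`. -/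
theorem stmt12 (n : ℕ) (hn : 1 ≤ n) (m : ℕ) (hm : 1 ≤ m) :
    ∃ C : ℝ, 0 < C ∧ ∀ φ : Rn n → ℝ, MemL1m n m φ → ∀ t : ℝ, 0 < t →
      ∑ α ∈ Finset.Nat.antidiagonalTuple n m,
          eLpNorm (fun x => mono n α x * heatSG n t φ x) 1 (volume : Measure (Rn n)) ≤
        ENNReal.ofReal C *
          (eLpNorm (fun x : Rn n => ‖x‖ ^ m * φ x) 1 (volume : Measure (Rn n)) +
            ENNReal.ofReal (t ^ ((m : ℝ) / 2)) * eLpNorm φ 1 (volume : Measure (Rn n))) := by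
  classical
  set K : ℕ := (Finset.Nat.antidiagonalTuple n m).card with hK
  set A : ℝ := 2 ^ m * ((1 + 8 ^ m * m.factorial) * 2 ^ ((n : ℝ) / 2) + 1) with hAdef
  have hA0 : 0 < A := by
    rw [hAdef]
    have h2 : (0:ℝ) < 2 ^ ((n : ℝ) / 2) := Real.rpow_pos_of_pos (by norm_num) _
    positivity
  refine ⟨(K + 1) * A, by positivity, ?_⟩
  intro φ hφ t ht
  have hφ1 : MemLp φ 1 (volume : Measure (Rn n)) := by
    have h := hφ 0 (by simp)
    simpa [mono] using h
  have key : ∀ α ∈ Finset.Nat.antidiagonalTuple n m,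
      eLpNorm (fun x => mono n α x * heatSG n t φ x) 1 (volume : Measure (Rn n)) ≤
        ENNReal.ofReal A *
          (eLpNorm (fun x : Rn n => ‖x‖ ^ m * φ x) 1 (volume : Measure (Rn n)) +
            ENNReal.ofReal (t ^ ((m : ℝ) / 2)) * eLpNorm φ 1 (volume : Measure (Rn n))) :=
    fun α hαmem => perAlpha ht φ hφ1 (Finset.Nat.mem_antidiagonalTuple.1 hαmem)
  calc ∑ α ∈ Finset.Nat.antidiagonalTuple n m,
        eLpNorm (fun x => mono n α x * heatSG n t φ x) 1 (volume : Measure (Rn n))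
      ≤ K • (ENNReal.ofReal A *
          (eLpNorm (fun x : Rn n => ‖x‖ ^ m * φ x) 1 (volume : Measure (Rn n)) +
            ENNReal.ofReal (t ^ ((m : ℝ) / 2)) * eLpNorm φ 1 (volume : Measure (Rn n)))) :=
        Finset.sum_le_card_nsmul _ _ _ key
    _ = ((K : ℝ≥0∞) * ENNReal.ofReal A) *
          (eLpNorm (fun x : Rn n => ‖x‖ ^ m * φ x) 1 (volume : Measure (Rn n)) +
            ENNReal.ofReal (t ^ ((m : ℝ) / 2)) * eLpNorm φ 1 (volume : Measure (Rn n))) := by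
        rw [nsmul_eq_mul, mul_assoc]
    _ ≤ ENNReal.ofReal (((K : ℕ) + 1) * A) *
          (eLpNorm (fun x : Rn n => ‖x‖ ^ m * φ x) 1 (volume : Measure (Rn n)) +
            ENNReal.ofReal (t ^ ((m : ℝ) / 2)) * eLpNorm φ 1 (volume : Measure (Rn n))) := by
        refine mul_le_mul_left ?_ _
        rw [← ENNReal.ofReal_natCast K, ← ENNReal.ofReal_mul (by positivity)]
        refine ENNReal.ofReal_le_ofReal ?_
        nlinarith [hA0.le]
    _ = ENNReal.ofReal ((K + 1) * A) *
          (eLpNorm (fun x : Rn n => ‖x‖ ^ m * φ x) 1 (volume : Measure (Rn n)) +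
            ENNReal.ofReal (t ^ ((m : ℝ) / 2)) * eLpNorm φ 1 (volume : Measure (Rn n))) := by
        norm_num
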